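/- arXiv:2502.06790 — 2 statements merged into one kernel-verified Lean document; each statement's English description precedes it below -/
import Mathlib

section
/- Every blocked chain of domino tiles has total pip sum at least 42. -/
/-- A domino tile is an unordered pair of values in `{0,…,6}`. -/
abbrev Tile := Sym2 (Fin 7)

/-- The pip sum of the tile `[a,b]` is `a + b`. -/
def pips (t : Tile) : ℕ :=
  Sym2.lift ⟨fun (a b : Fin 7) => (a : ℕ) + (b : ℕ), fun a b => Nat.add_comm a b⟩ t

/-- A chain of domino tiles: a nonempty finite sequence of oriented tiles
`(a₁,b₁),…,(aₙ,bₙ)` whose underlying unordered tiles are pairwise distinct and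
which satisfies `bᵢ = aᵢ₊₁` for all `1 ≤ i < n`. -/
structure DChain where
  tiles : List (Fin 7 × Fin 7)
  ne : tiles ≠ []
  nodup : (tiles.map fun p => Sym2.mk p.1 p.2).Nodup
  linked : tiles.Chain' fun p q => p.2 = q.1

/-- The left end `a₁` of a chain. -/
def DChain.left (C : DChain) : Fin 7 := (C.tiles.head C.ne).1

/-- The right end `bₙ` of a chain. -/
def DChain.right (C : DChain) : Fin 7 := (C.tiles.getLast C.ne).2

/-- The `2n` entries `a₁,b₁,a₂,b₂,…,aₙ,bₙ` of a chain. -/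
def DChain.entries (C : DChain) : List (Fin 7) := C.tiles.flatMap fun p => [p.1, p.2]

/-- The underlying (unordered) tiles of a chain. -/
def DChain.tileList (C : DChain) : List Tile := C.tiles.map fun p => Sym2.mk p.1 p.2

/-- The total pip sum of a chain. -/
def DChain.pipsSum (C : DChain) : ℕ := (C.tiles.map fun p => (p.1 : ℕ) + (p.2 : ℕ)).sum

/-- A chain is blocked if no domino tile outside the chain contains its left end,
and no domino tile outside the chain contains its right end. -/
def DChain.Blocked (C : DChain) : Prop :=
  ∀ t : Tile, t ∉ C.tileList → C.left ∉ t ∧ C.right ∉ t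

/- auxiliary lemmas -/
def Fcnt (l : Fin 7) (t : Tile) : ℕ :=
  Sym2.lift ⟨fun a b => (if a = l then 1 else 0) + (if b = l then 1 else 0), by intros; ring⟩ t

lemma Fcnt_eq_zero (l : Fin 7) (t : Tile) (h : l ∉ t) : Fcnt l t = 0 := by
  induction t using Sym2.ind with
  | _ a b =>
    simp only [Sym2.mem_iff, not_or] at h
    simp [Fcnt, Ne.symm h.1, Ne.symm h.2]

lemma entSum (l : List (Fin 7 × Fin 7)) :
    ((l.flatMap fun p => [p.1, p.2]).map Fin.val).sum = (l.map fun p => (p.1 : ℕ) + (p.2 : ℕ)).sum := by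
  induction l with
  | nil => simp
  | cons p t ih => simp [ih]; omega

lemma Fcnt_mk (k : Fin 7) (p : Fin 7 × Fin 7) :
    Fcnt k (Sym2.mk p.1 p.2) = (if p.1 = k then 1 else 0) + (if p.2 = k then 1 else 0) := by
  obtain ⟨a, b⟩ := p
  simp [Fcnt]

lemma cntEq (k : Fin 7) (l : List (Fin 7 × Fin 7)) :
    (l.flatMap fun p => [p.1, p.2]).count k = (l.map fun p => Fcnt k (Sym2.mk p.1 p.2)).sum := by
  induction l with
  | nil => simp
  | cons p t ih =>
    simp only [List.flatMap_cons, List.count_append, List.map_cons, List.sum_cons, ih, Fcnt_mk]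
    simp only [List.count_cons, List.count_nil, beq_iff_eq]
    omega

lemma parity (k : Fin 7) :
    ∀ (l : List (Fin 7 × Fin 7)) (h : l ≠ []) (_ : l.Chain' fun p q => p.2 = q.1),
      Even ((l.flatMap fun p => [p.1, p.2]).count k
        + (if (l.head h).1 = k then 1 else 0) + (if (l.getLast h).2 = k then 1 else 0))
  | [p], _, _ => by
    simp only [List.flatMap_cons, List.flatMap_nil, List.append_nil, List.head_cons,
      List.getLast_singleton]
    refine ⟨(if p.1 = k then 1 else 0) + (if p.2 = k then 1 else 0), ?_⟩
    simp only [List.count_cons, List.count_nil, beq_iff_eq]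
    by_cases h1 : p.1 = k <;> by_cases h2 : p.2 = k <;> simp only [h1, h2, ↓reduceIte] <;> omega
  | p :: q :: t, _, hc => by
    have hpq : p.2 = q.1 := (List.isChain_cons_cons.mp hc).1
    have ih := parity k (q :: t) (by simp) (List.isChain_cons_cons.mp hc).2
    simp only [List.head_cons] at ih
    obtain ⟨m, hm⟩ := ih
    have hcount : ((p :: q :: t).flatMap fun p => [p.1, p.2]).count k
        = (if p.1 = k then 1 else 0) + (if p.2 = k then 1 else 0)
          + ((q :: t).flatMap fun p => [p.1, p.2]).count k := by
      simp only [List.flatMap_cons, List.count_append, List.count_cons, List.count_nil, beq_iff_eq]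
      omega
    have hlast : (p :: q :: t).getLast (by simp) = (q :: t).getLast (by simp) := by
      simp [List.getLast_cons]
    rw [hcount, List.head_cons, hlast, hpq]
    exact ⟨m + (if p.1 = k then 1 else 0), by
      by_cases h1 : p.1 = k <;> by_cases h2 : q.1 = k <;>
        by_cases h3 : ((q :: t).getLast (by simp)).2 = k <;>
        simp only [h1, h2, h3, ↓reduceIte] at hm ⊢ <;> omega⟩

set_option maxRecDepth 20000 in
lemma sumFcnt (l : Fin 7) :
    ∑ t ∈ Finset.univ.filter (fun t : Tile => l ∈ t), Fcnt l t = 8 := by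
  revert l; decide

set_option maxRecDepth 20000 in
lemma sumTarget (l : Fin 7) :
    42 ≤ ∑ k : Fin 7, (if k = l then 8 * (l : ℕ) else 2 * (k : ℕ)) := by
  revert l; decide

/-- Every blocked chain of domino tiles has total pip sum at least 42. -/
theorem blocked_pipsSum_ge_42 (C : DChain) (h : C.Blocked) : 42 ≤ C.pipsSum := by
  classical
  set ℓ := C.left with hℓ
  have hall : ∀ t : Tile, ℓ ∈ t → t ∈ C.tileList := by
    intro t ht
    by_contra hnot
    exact (h t hnot).1 ht
  have hc8 : C.entries.count ℓ = 8 := by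
    have h1 : C.entries.count ℓ = (C.tileList.map (Fcnt ℓ)).sum := by
      rw [DChain.entries, cntEq, DChain.tileList, List.map_map]
      rfl
    have h2 : (C.tileList.map (Fcnt ℓ)).sum = ∑ t ∈ C.tileList.toFinset, Fcnt ℓ t :=
      (List.sum_toFinset _ C.nodup).symm
    have h3 : ∑ t ∈ C.tileList.toFinset, Fcnt ℓ t
        = ∑ t ∈ Finset.univ.filter (fun t : Tile => ℓ ∈ t), Fcnt ℓ t := by
      refine (Finset.sum_subset ?_ ?_).symm
      · intro t ht
        simp only [Finset.mem_filter, Finset.mem_univ, true_and] at ht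
        exact List.mem_toFinset.mpr (hall t ht)
      · intro t _ ht
        simp only [Finset.mem_filter, Finset.mem_univ, true_and] at ht
        exact Fcnt_eq_zero ℓ t ht
    rw [h1, h2, h3, sumFcnt]
  have hpar := fun k => parity k C.tiles C.ne C.linked
  have hh1 : (C.tiles.head C.ne).1 = ℓ := rfl
  have hh2 : (C.tiles.getLast C.ne).2 = C.right := rfl
  have hright : C.right = ℓ := by
    have hev := hpar ℓ
    rw [show C.tiles.flatMap (fun p => [p.1, p.2]) = C.entries from rfl, hc8, hh1, hh2] at hev
    by_contra hne
    rw [if_pos rfl, if_neg hne] at hev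
    obtain ⟨m, hm⟩ := hev
    omega
  have hc2 : ∀ k : Fin 7, k ≠ ℓ → 2 ≤ C.entries.count k := by
    intro k hk
    have htl : (Sym2.mk ℓ k : Tile) ∈ C.tileList := hall _ (by simp)
    have hmem : k ∈ C.entries := by
      rw [DChain.tileList] at htl
      obtain ⟨p, hp, hpe⟩ := List.mem_map.mp htl
      rw [Sym2.eq, Sym2.rel_iff'] at hpe
      rcases hpe with hpe | hpe
      · refine List.mem_flatMap.mpr ⟨p, hp, ?_⟩
        have : p.2 = k := congrArg Prod.snd hpe
        simp [this]
      · refine List.mem_flatMap.mpr ⟨p, hp, ?_⟩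
        have : p.1 = k := congrArg Prod.fst hpe
        simp [this]
    have hpos : 1 ≤ C.entries.count k := List.count_pos_iff.mpr hmem
    have hev := hpar k
    rw [show C.tiles.flatMap (fun p => [p.1, p.2]) = C.entries from rfl, hh1, hh2, hright] at hev
    rw [if_neg (Ne.symm hk)] at hev
    obtain ⟨m, hm⟩ := hev
    omega
  have hsum : C.pipsSum = ∑ k : Fin 7, C.entries.count k • (k : ℕ) := by
    rw [DChain.pipsSum, ← entSum]
    rw [show C.tiles.flatMap (fun p => [p.1, p.2]) = C.entries from rfl]
    rw [Finset.sum_list_map_count]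
    refine Finset.sum_subset (Finset.subset_univ _) ?_
    intro k _ hk
    rw [List.count_eq_zero_of_not_mem (fun hmem => hk (List.mem_toFinset.mpr hmem))]
    simp
  have hbound : ∑ k : Fin 7, (if k = ℓ then 8 * (ℓ : ℕ) else 2 * (k : ℕ))
      ≤ ∑ k : Fin 7, C.entries.count k • (k : ℕ) := by
    refine Finset.sum_le_sum ?_
    intro k _
    by_cases hkℓ : k = ℓ
    · subst hkℓ
      simp [hc8]
    · have := hc2 k hkℓ
      simp only [if_neg hkℓ, smul_eq_mul]
      exact Nat.mul_le_mul_right _ this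
  calc 42 ≤ ∑ k : Fin 7, (if k = ℓ then 8 * (ℓ : ℕ) else 2 * (k : ℕ)) := sumTarget ℓ
    _ ≤ _ := hbound
    _ = C.pipsSum := hsum.symm
end

section
/- In a minimal block (tranca mínima), if at some turn a player of the losing team passes at a moment when the two open ends of the chain are two distinct nonzero values, then the losing team plays at least one tile during the game. -/
/-- The board: the chain of already played tiles, as a list of oriented tiles
concatenated left to right (consecutive tiles match end to end). -/
abbrev Board := List (Fin 7 × Fin 7)

/-- The total pip sum of the tiles on a board. -/
def boardPips (b : Board) : ℕ := (b.map fun p => (p.1 : ℕ) + (p.2 : ℕ)).sum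

/-- A tile `t` can extend a (nonempty) board `b` when `t` contains one of the two
open ends of `b`. -/
def canExtend (b : Board) (t : Tile) : Prop :=
  b ≠ [] ∧ (b.head!.1 ∈ t ∨ b.getLast!.2 ∈ t)

/-- The total pip sum of a hand of tiles. -/
def handPips (h : Finset Tile) : ℕ := ∑ t ∈ h, pips t

/-- A game state: the board of already played tiles, the four remaining hands, and
whose turn it is. -/
structure GState where
  board : Board
  hands : Fin 4 → Finset Tile
  turn : Fin 4

/-- Players `0` and `2` form team `false`; players `1` and `3` form team `true`. -/
def playerTeam (i : Fin 4) : Bool := decide ((i : ℕ) % 2 = 1)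

/-- The total pip sum remaining in the hands of the two players of a team. -/
def GState.teamPips (s : GState) (tm : Bool) : ℕ :=
  if tm then handPips (s.hands 1) + handPips (s.hands 3)
  else handPips (s.hands 0) + handPips (s.hands 2)

/-- A single legal move of the game (the game is still running, i.e. all hands are
nonempty).  The player to move either plays a tile from their hand — the first tile
played starts the chain, and every later tile is appended, suitably oriented, to one
of the two open ends of the chain — or passes, which is permitted only if no tile
remaining in their hand contains either open end of the chain. -/
inductive Step : GState → GState → Prop
  | playFirst (s : GState) (p : Fin 7 × Fin 7)
      (hrun : ∀ i, s.hands i ≠ ∅)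
      (hb : s.board = [])
      (ht : Sym2.mk p.1 p.2 ∈ s.hands s.turn) :
      Step s ⟨[p],
        Function.update s.hands s.turn ((s.hands s.turn).erase (Sym2.mk p.1 p.2)),
        s.turn + 1⟩
  | playLeft (s : GState) (p : Fin 7 × Fin 7)
      (hrun : ∀ i, s.hands i ≠ ∅)
      (hb : s.board ≠ [])
      (ht : Sym2.mk p.1 p.2 ∈ s.hands s.turn)
      (hfit : p.2 = s.board.head!.1) :
      Step s ⟨p :: s.board,
        Function.update s.hands s.turn ((s.hands s.turn).erase (Sym2.mk p.1 p.2)),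
        s.turn + 1⟩
  | playRight (s : GState) (p : Fin 7 × Fin 7)
      (hrun : ∀ i, s.hands i ≠ ∅)
      (hb : s.board ≠ [])
      (ht : Sym2.mk p.1 p.2 ∈ s.hands s.turn)
      (hfit : p.1 = s.board.getLast!.2) :
      Step s ⟨s.board ++ [p],
        Function.update s.hands s.turn ((s.hands s.turn).erase (Sym2.mk p.1 p.2)),
        s.turn + 1⟩
  | pass (s : GState)
      (hrun : ∀ i, s.hands i ≠ ∅)
      (hb : s.board ≠ [])
      (hcant : ∀ t ∈ s.hands s.turn, ¬ canExtend s.board t) :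
      Step s ⟨s.board, s.hands, s.turn + 1⟩

/-- A four-player partnership domino game: a partition of the 28 domino tiles into
four initial hands of 7 tiles each, together with a legal play sequence of states;
player 1 (index `0`) moves first, and players move cyclically. -/
structure Game where
  initHands : Fin 4 → Finset Tile
  card_initHands : ∀ i, (initHands i).card = 7
  disj_initHands : ∀ i j, i ≠ j → Disjoint (initHands i) (initHands j)
  cover_initHands : ∀ t : Tile, ∃ i, t ∈ initHands i
  states : List GState
  states_ne : states ≠ []
  head_states : states.head states_ne = ⟨[], initHands, 0⟩
  chain_states : states.Chain' Step

/-- The final position of a game. -/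
def Game.finalState (g : Game) : GState := g.states.getLast g.states_ne

/-- A position is blocked if at least one tile has been played and no player's
remaining hand contains a tile containing either open end of the chain. -/
def IsBlocked (s : GState) : Prop :=
  s.board ≠ [] ∧ ∀ i : Fin 4, ∀ t ∈ s.hands i, ¬ canExtend s.board t

/-- A game ends blocked if its final position is blocked. -/
def Game.EndsBlocked (g : Game) : Prop := IsBlocked g.finalState

/-- Team `tm` plays at least one tile during the game: at some turn the player to move
belongs to team `tm` and the board changes (a tile is placed). -/
def Game.teamPlays (g : Game) (tm : Bool) : Prop :=
  ∃ (i : ℕ) (h : i + 1 < g.states.length),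
    playerTeam ((g.states.get ⟨i, by omega⟩).turn) = tm ∧
    (g.states.get ⟨i + 1, h⟩).board ≠ (g.states.get ⟨i, by omega⟩).board

/-! ### Auxiliary development -/

open Fin.NatCast

section TrancaAux

open Finset

/-- Number of entries of a tile equal to `v`. -/
def cnt (v : Fin 7) (t : Tile) : ℕ :=
  Sym2.lift ⟨fun a b => (if a = v then 1 else 0) + (if b = v then 1 else 0),
    fun a b => by dsimp; omega⟩ t

lemma cnt_mk (v : Fin 7) (p : Fin 7 × Fin 7) :
    cnt v (Sym2.mk p.1 p.2) = (if p.1 = v then 1 else 0) + (if p.2 = v then 1 else 0) := rfl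

lemma mem_iff_cnt_pos' : ∀ (v : Fin 7) (t : Tile), v ∈ t ↔ 1 ≤ cnt v t := by decide

lemma mem_iff_cnt_pos {v : Fin 7} {t : Tile} : v ∈ t ↔ 1 ≤ cnt v t :=
  mem_iff_cnt_pos' v t

lemma cnt_eq_zero {v : Fin 7} {t : Tile} (h : v ∉ t) : cnt v t = 0 := by
  have h2 := mem_iff_cnt_pos (v := v) (t := t)
  by_contra hc
  exact h (h2.mpr (by omega))

lemma sum_cnt (v : Fin 7) : ∑ t : Tile, cnt v t = 8 := by revert v; decide

lemma cnt_total (t : Tile) : ∑ v : Fin 7, cnt v t = 2 := by revert t; decide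

lemma pips_eq_sum (t : Tile) : pips t = ∑ v : Fin 7, (v : ℕ) * cnt v t := by
  revert t; decide

lemma card_univ_tile : (univ : Finset Tile).card = 28 := by decide

lemma sum_fin7 : ∑ v : Fin 7, (v : ℕ) = 21 := by decide

lemma card_E (e e' : Fin 7) (h : e ≠ e') :
    (univ.filter fun t : Tile => e ∈ t ∨ e' ∈ t).card = 13 := by
  revert h; revert e e'; decide

lemma card_A (e e' : Fin 7) (he : e ≠ 0) (he' : e' ≠ 0) (h : e ≠ e') :
    (univ.filter fun t : Tile => e' ∈ t ∧ e ∉ t ∧ (0 : Fin 7) ∉ t).card = 5 := by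
  revert he he' h; revert e e'; decide

/-! ### List helper lemmas -/

lemma getLast!_eq_getLast' (l : Board) (h : l ≠ []) : l.getLast! = l.getLast h := by
  cases l with
  | nil => exact absurd rfl h
  | cons a as => rfl

lemma head!_eq_head' (l : Board) (h : l ≠ []) : l.head! = l.head h := by
  cases l with
  | nil => exact absurd rfl h
  | cons a as => rfl

lemma getLast!_cons' (p : Fin 7 × Fin 7) (l : Board) (h : l ≠ []) :
    (p :: l).getLast! = l.getLast! := by
  rw [getLast!_eq_getLast' _ (by simp), getLast!_eq_getLast' l h, List.getLast_cons h]

lemma getLast!_append' (l : Board) (p : Fin 7 × Fin 7) :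
    (l ++ [p]).getLast! = p := by
  rw [getLast!_eq_getLast' _ (by simp)]
  exact List.getLast_concat

lemma head!_append' (l : Board) (p : Fin 7 × Fin 7) (h : l ≠ []) :
    (l ++ [p]).head! = l.head! := by
  rw [head!_eq_head' _ (by simp), head!_eq_head' _ h]
  exact List.head_append_of_ne_nil h

lemma head!_cons' (p : Fin 7 × Fin 7) (l : Board) : (p :: l).head! = p := rfl

/-! ### Chain parity -/

lemma occ_parity (v : Fin 7) :
    ∀ (B : Board), B ≠ [] → B.Chain' (fun p q => p.2 = q.1) →
      ((B.map fun p => cnt v (Sym2.mk p.1 p.2)).sum) % 2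
        = ((if B.head!.1 = v then 1 else 0) + (if B.getLast!.2 = v then 1 else 0)) % 2
  | [], h, _ => absurd rfl h
  | [p], _, _ => by
    rw [show ([p] : Board).getLast! = p from rfl]
    simp [cnt_mk]
    rfl
  | p :: q :: l, _, hch => by
    have hch' := List.isChain_cons_cons.mp hch
    have ih := occ_parity v (q :: l) (by simp) hch'.2
    have hfit : p.2 = q.1 := hch'.1
    rw [List.map_cons, List.sum_cons, head!_cons',
      getLast!_cons' p (q :: l) (by simp), cnt_mk, hfit]
    rw [head!_cons'] at ih
    by_cases h1 : p.1 = v <;> by_cases h2 : q.1 = v <;>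
      by_cases h3 : (q :: l).getLast!.2 = v <;>
      simp only [h1, h2, h3, if_true, if_false] at ih ⊢ <;>
      omega

/-! ### Structure of the final blocked minimal position -/

lemma finalFacts (B : Board) (h : Fin 4 → Finset Tile)
    (hBne : B ≠ []) (hch : B.Chain' fun p q => p.2 = q.1)
    (hcnt : ∀ t : Tile, Multiset.count t (↑(B.map (fun p => Sym2.mk p.1 p.2)) : Multiset Tile)
        + ∑ j : Fin 4, Multiset.count t (h j).val = 1)
    (hblock : ∀ j : Fin 4, ∀ t ∈ h j, ¬ canExtend B t)
    (hpips : boardPips B = 42) :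
    ∃ played : Finset Tile,
      (∀ t ∈ played, ∀ j, t ∉ h j) ∧
      (∀ t : Tile, t ∉ played → ∃ j, t ∈ h j) ∧
      played.card = 10 ∧
      (∑ j : Fin 4, (h j).card) = 18 ∧
      B.head!.1 = 0 ∧ B.getLast!.2 = 0 ∧
      (∀ v : Fin 7, v ≠ 0 → ∑ t ∈ played, cnt v t = 2) := by
  classical
  set M : Multiset Tile := (↑(B.map (fun p => Sym2.mk p.1 p.2)) : Multiset Tile) with hM
  set played : Finset Tile := Finset.univ.filter (fun t => t ∈ B.map (fun p => Sym2.mk p.1 p.2)) with hplayed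
  have hmemM : ∀ t : Tile, t ∈ M ↔ t ∈ played := by
    intro t; simp [hplayed, hM]
  have hMval : M = played.val := by
    refine Multiset.ext.mpr fun t => ?_
    have h1 := hcnt t
    have h2 : Multiset.count t played.val = if t ∈ played then 1 else 0 := by
      rw [Multiset.count_eq_of_nodup played.nodup]
      simp [Finset.mem_val]
    rw [h2]
    by_cases hmem : t ∈ M
    · rw [if_pos ((hmemM t).mp hmem)]
      have := Multiset.one_le_count_iff_mem.mpr hmem
      omega
    · rw [if_neg (fun hc => hmem ((hmemM t).mpr hc)),
        Multiset.count_eq_zero_of_notMem hmem]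
  have hsum : ∀ f : Tile → ℕ, (B.map fun p => f (Sym2.mk p.1 p.2)).sum = ∑ t ∈ played, f t := by
    intro f
    calc (B.map fun p => f (Sym2.mk p.1 p.2)).sum
        = ((B.map (fun p => Sym2.mk p.1 p.2)).map f).sum := by rw [List.map_map]; rfl
      _ = (Multiset.map f M).sum := by
          rw [hM]
          rw [Multiset.map_coe, Multiset.sum_coe]
      _ = ∑ t ∈ played, f t := by rw [hMval]; rfl
  have hdisj : ∀ t ∈ played, ∀ j, t ∉ h j := by
    intro t ht j hj
    have h1 := hcnt t
    have hMc : 1 ≤ Multiset.count t M := Multiset.one_le_count_iff_mem.mpr ((hmemM t).mpr ht)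
    have hjc : 1 ≤ Multiset.count t (h j).val :=
      Multiset.one_le_count_iff_mem.mpr (Finset.mem_val.mpr hj)
    have hle : Multiset.count t (h j).val ≤ ∑ j', Multiset.count t (h j').val :=
      Finset.single_le_sum (f := fun j' => Multiset.count t (h j').val)
        (fun _ _ => Nat.zero_le _) (Finset.mem_univ j)
    omega
  have hcover : ∀ t : Tile, t ∉ played → ∃ j, t ∈ h j := by
    intro t ht
    by_contra hc; push_neg at hc
    have h1 := hcnt t
    have hMc : Multiset.count t M = 0 :=
      Multiset.count_eq_zero_of_notMem (fun hm => ht ((hmemM t).mp hm))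
    have hz : ∀ j ∈ Finset.univ, Multiset.count t (h j).val = 0 := fun j _ =>
      Multiset.count_eq_zero_of_notMem (fun hm => hc j (Finset.mem_val.mp hm))
    rw [hMc, Finset.sum_eq_zero hz] at h1
    omega
  have havoid : ∀ j : Fin 4, ∀ t ∈ h j, B.head!.1 ∉ t ∧ B.getLast!.2 ∉ t := by
    intro j t ht
    have hb := hblock j t ht
    rw [canExtend] at hb
    push_neg at hb
    exact hb hBne
  have hallplayed : ∀ t : Tile, (B.head!.1 ∈ t ∨ B.getLast!.2 ∈ t) → t ∈ played := by
    intro t hmem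
    by_contra hnp
    obtain ⟨j, hj⟩ := hcover t hnp
    have := havoid j t hj
    tauto
  have hocc_all : ∀ v : Fin 7, (∀ t : Tile, v ∈ t → t ∈ played) →
      ∑ t ∈ played, cnt v t = 8 := by
    intro v hv
    rw [← sum_cnt v]
    exact Finset.sum_subset (Finset.subset_univ _)
      (fun t _ htp => cnt_eq_zero (fun hm => htp (hv t hm)))
  have hpar : ∀ v : Fin 7, (∑ t ∈ played, cnt v t) % 2
      = ((if B.head!.1 = v then 1 else 0) + (if B.getLast!.2 = v then 1 else 0)) % 2 := by
    intro v; rw [← hsum (cnt v)]; exact occ_parity v B hBne hch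
  have h8 : ∑ t ∈ played, cnt B.head!.1 t = 8 :=
    hocc_all _ (fun t hm => hallplayed t (Or.inl hm))
  have hf12 : B.head!.1 = B.getLast!.2 := by
    by_contra hne
    have hp := hpar B.head!.1
    rw [h8, if_pos rfl, if_neg (fun hc => hne hc.symm)] at hp
    omega
  have hge2 : ∀ v : Fin 7, v ≠ B.head!.1 → 2 ≤ ∑ t ∈ played, cnt v t := by
    intro v hv
    have hmem : Sym2.mk B.head!.1 v ∈ played :=
      hallplayed _ (Or.inl (by simp [Sym2.mem_iff]))
    have h1 : cnt v (Sym2.mk B.head!.1 v) = (if B.head!.1 = v then 1 else 0) + 1 := by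
      rw [show cnt v (Sym2.mk B.head!.1 v) = _ from cnt_mk v (B.head!.1, v)]; simp
    have hle : cnt v (Sym2.mk B.head!.1 v) ≤ ∑ t ∈ played, cnt v t :=
      Finset.single_le_sum (f := fun t => cnt v t) (fun _ _ => Nat.zero_le _) hmem
    have hev := hpar v
    have hb1 : (if B.head!.1 = v then (1 : ℕ) else 0) = 0 := if_neg (fun hc => hv hc.symm)
    have hb2 : (if B.getLast!.2 = v then (1 : ℕ) else 0) = 0 :=
      if_neg (fun hc => hv (hf12.trans hc).symm)
    rw [hb1, hb2] at hev
    rw [hb1] at h1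
    omega
  have hP42 : ∑ v : Fin 7, (v : ℕ) * (∑ t ∈ played, cnt v t) = 42 := by
    have h1 : (B.map fun p => ((p.1 : ℕ) + (p.2 : ℕ))).sum = ∑ t ∈ played, pips t :=
      hsum pips
    calc ∑ v : Fin 7, (v : ℕ) * (∑ t ∈ played, cnt v t)
        = ∑ v : Fin 7, ∑ t ∈ played, (v : ℕ) * cnt v t := by
          refine Finset.sum_congr rfl (fun v _ => ?_)
          rw [Finset.mul_sum]
      _ = ∑ t ∈ played, ∑ v : Fin 7, (v : ℕ) * cnt v t := Finset.sum_comm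
      _ = ∑ t ∈ played, pips t :=
          Finset.sum_congr rfl (fun t _ => (pips_eq_sum t).symm)
      _ = boardPips B := by rw [boardPips, h1]
      _ = 42 := hpips
  have hsplit : (B.head!.1 : ℕ) * 8
      + ∑ v ∈ Finset.univ.erase B.head!.1, (v : ℕ) * (∑ t ∈ played, cnt v t) = 42 := by
    rw [← hP42]
    conv_lhs => rw [← h8]
    exact Finset.add_sum_erase Finset.univ
      (fun v : Fin 7 => (v : ℕ) * (∑ t ∈ played, cnt v t)) (Finset.mem_univ B.head!.1)
  have hsum_erase : (B.head!.1 : ℕ) + ∑ v ∈ Finset.univ.erase B.head!.1, (v : ℕ) = 21 := by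
    rw [Finset.add_sum_erase _ (fun v : Fin 7 => (v : ℕ)) (Finset.mem_univ B.head!.1), sum_fin7]
  have hlow : ∑ v ∈ Finset.univ.erase B.head!.1, (v : ℕ) * 2
      ≤ ∑ v ∈ Finset.univ.erase B.head!.1, (v : ℕ) * (∑ t ∈ played, cnt v t) :=
    Finset.sum_le_sum (fun v hv => Nat.mul_le_mul_left _ (hge2 v (Finset.ne_of_mem_erase hv)))
  have h2l : ∑ v ∈ Finset.univ.erase B.head!.1, (v : ℕ) * 2
      = (∑ v ∈ Finset.univ.erase B.head!.1, (v : ℕ)) * 2 := by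
    rw [Finset.sum_mul]
  have hf1 : B.head!.1 = 0 := by
    have hv : (B.head!.1 : ℕ) = 0 := by omega
    exact Fin.ext hv
  have hz0 : ((0 : Fin 7) : ℕ) = 0 := rfl
  rw [hf1] at hsplit hsum_erase hlow h2l hge2 h8
  have hEq : ∑ v ∈ Finset.univ.erase (0 : Fin 7), (v : ℕ) * 2
      = ∑ v ∈ Finset.univ.erase (0 : Fin 7), (v : ℕ) * (∑ t ∈ played, cnt v t) := by
    omega
  have hocc2 : ∀ v : Fin 7, v ≠ 0 → ∑ t ∈ played, cnt v t = 2 := by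
    intro v hv
    have hvm : v ∈ Finset.univ.erase (0 : Fin 7) :=
      Finset.mem_erase.mpr ⟨hv, Finset.mem_univ v⟩
    have hpt := (Finset.sum_eq_sum_iff_of_le
      (fun i hi => Nat.mul_le_mul_left _ (hge2 i (Finset.ne_of_mem_erase hi)))).mp hEq v hvm
    have hvpos : 0 < (v : ℕ) := by
      rcases Nat.eq_zero_or_pos (v : ℕ) with h0 | h0
      · exact absurd (Fin.ext h0) hv
      · exact h0
    have := Nat.eq_of_mul_eq_mul_left hvpos hpt
    omega
  have hcard10 : played.card = 10 := by
    have h2c : ∑ t ∈ played, (∑ v : Fin 7, cnt v t) = played.card * 2 := by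
      rw [Finset.sum_congr rfl (fun t _ => cnt_total t), Finset.sum_const, smul_eq_mul]
    have hswap : ∑ t ∈ played, ∑ v : Fin 7, cnt v t
        = ∑ v : Fin 7, ∑ t ∈ played, cnt v t := Finset.sum_comm
    have htot : ∑ v : Fin 7, ∑ t ∈ played, cnt v t = 20 := by
      rw [← Finset.add_sum_erase _ (fun v => ∑ t ∈ played, cnt v t)
        (Finset.mem_univ (0 : Fin 7)), h8,
        Finset.sum_congr rfl (fun v hv => hocc2 v (Finset.ne_of_mem_erase hv)),
        Finset.sum_const]
      simp
    omega
  have hcard18 : ∑ j : Fin 4, (h j).card = 18 := by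
    have hall : ∑ t : Tile, (Multiset.count t M + ∑ j : Fin 4, Multiset.count t (h j).val)
        = ∑ _t : Tile, (1 : ℕ) :=
      Finset.sum_congr rfl (fun t _ => hcnt t)
    rw [Finset.sum_add_distrib] at hall
    have hMc : ∑ t : Tile, Multiset.count t M = played.card := by
      rw [hMval, Multiset.sum_count_eq_card (fun _ _ => Finset.mem_univ _)]
      rfl
    have hjc : ∑ t : Tile, ∑ j : Fin 4, Multiset.count t (h j).val
        = ∑ j : Fin 4, (h j).card := by
      rw [Finset.sum_comm]
      refine Finset.sum_congr rfl (fun j _ => ?_)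
      rw [Multiset.sum_count_eq_card (fun _ _ => Finset.mem_univ _)]
      rfl
    have h28 : ∑ _t : Tile, (1 : ℕ) = 28 := by
      rw [Finset.sum_const, card_univ_tile]
      simp
    rw [hMc, hjc, h28] at hall
    omega
  exact ⟨played, hdisj, hcover, hcard10, hcard18, hf1, by rw [← hf12]; exact hf1, hocc2⟩

/-! ### The extra tile containing a given end value -/

lemma extraTile (played : Finset Tile) (v : Fin 7) (hv : v ≠ 0)
    (hocc : ∑ t ∈ played, cnt v t = 2) (h0v : Sym2.mk 0 v ∈ played) :
    ∃ s : Tile, s ∈ played ∧ v ∈ s ∧ (0 : Fin 7) ∉ s ∧ s ≠ Sym2.mk 0 v ∧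
      (∀ t ∈ played, v ∈ t → t = Sym2.mk 0 v ∨ t = s) := by
  classical
  have hfil : ∑ t ∈ played.filter (fun t => v ∈ t), cnt v t = 2 := by
    rw [Finset.sum_filter_of_ne (fun t _ hc => mem_iff_cnt_pos.mpr (by omega)), hocc]
  have hc0 : cnt v (Sym2.mk 0 v) = 1 := by
    rw [show cnt v (Sym2.mk 0 v) = _ from cnt_mk v (0, v)]
    rw [if_neg (Ne.symm hv), if_pos rfl]
  have hm0 : Sym2.mk 0 v ∈ played.filter (fun t => v ∈ t) :=
    Finset.mem_filter.mpr ⟨h0v, by simp [Sym2.mem_iff]⟩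
  have hsum1 : ∑ t ∈ (played.filter (fun t => v ∈ t)).erase (Sym2.mk 0 v), cnt v t = 1 := by
    have h1 : cnt v (Sym2.mk 0 v)
        + ∑ t ∈ (played.filter (fun t => v ∈ t)).erase (Sym2.mk 0 v), cnt v t
        = ∑ t ∈ played.filter (fun t => v ∈ t), cnt v t :=
      Finset.add_sum_erase _ (fun t => cnt v t) hm0
    omega
  have hpos : ∀ t ∈ (played.filter (fun t => v ∈ t)).erase (Sym2.mk 0 v), 1 ≤ cnt v t :=
    fun t ht => mem_iff_cnt_pos.mp (Finset.mem_filter.mp (Finset.mem_of_mem_erase ht)).2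
  have hcard_le : ((played.filter (fun t => v ∈ t)).erase (Sym2.mk 0 v)).card ≤ 1 := by
    have h1 := Finset.card_nsmul_le_sum _ (fun t => cnt v t) 1 hpos
    rw [hsum1] at h1
    simpa using h1
  have hne : ((played.filter (fun t => v ∈ t)).erase (Sym2.mk 0 v)).Nonempty := by
    rw [Finset.nonempty_iff_ne_empty]
    intro hc
    rw [hc] at hsum1
    simp at hsum1
  obtain ⟨s, hs⟩ := Finset.card_eq_one.mp (le_antisymm hcard_le hne.card_pos)
  have hsP : s ∈ (played.filter (fun t => v ∈ t)).erase (Sym2.mk 0 v) := by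
    rw [hs]; exact Finset.mem_singleton_self s
  have hsf := Finset.mem_filter.mp (Finset.mem_of_mem_erase hsP)
  have hsne : s ≠ Sym2.mk 0 v := Finset.ne_of_mem_erase hsP
  have h0s : (0 : Fin 7) ∉ s := by
    intro h0
    exact hsne ((Sym2.mem_and_mem_iff (Ne.symm hv)).mp ⟨h0, hsf.2⟩)
  refine ⟨s, hsf.1, hsf.2, h0s, hsne, fun t ht hvt => ?_⟩
  by_cases hne' : t = Sym2.mk 0 v
  · exact Or.inl hne'
  · right
    have hmem : t ∈ (played.filter (fun t => v ∈ t)).erase (Sym2.mk 0 v) :=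
      Finset.mem_erase.mpr ⟨hne', Finset.mem_filter.mpr ⟨ht, hvt⟩⟩
    rw [hs] at hmem
    exact Finset.mem_singleton.mp hmem

/-! ### The endgame counting contradiction -/

lemma endgame (played hP hQ hA hB : Finset Tile) (e e' : Fin 7)
    (he : e ≠ 0) (he' : e' ≠ 0) (hee : e ≠ e')
    (hdisjQ : ∀ t ∈ played, t ∉ hQ)
    (hcover : ∀ t : Tile, t ∉ played → t ∈ hP ∨ t ∈ hQ ∨ t ∈ hA ∨ t ∈ hB)
    (hcards : hA.card + hB.card ≤ 4)
    (hocc : ∑ t ∈ played, cnt e t = 2) (hocc' : ∑ t ∈ played, cnt e' t = 2)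
    (h0e : Sym2.mk 0 e ∈ played) (h0e' : Sym2.mk 0 e' ∈ played)
    (hPav : ∀ t ∈ hP, e ∉ t ∧ e' ∉ t)
    (hQav : ∀ t ∈ hQ, e ∉ t ∧ (0 : Fin 7) ∉ t) : False := by
  classical
  obtain ⟨s1, hs1p, hs1e, hs1z, hs1ne, hs1cov⟩ := extraTile played e he hocc h0e
  obtain ⟨s2, hs2p, hs2e, hs2z, hs2ne, hs2cov⟩ := extraTile played e' he' hocc' h0e'
  set E : Finset Tile := Finset.univ.filter (fun t => e ∈ t ∨ e' ∈ t) with hE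
  have hEcard : E.card = 13 := card_E e e' hee
  set EP : Finset Tile := E.filter (fun t => t ∈ played) with hEP
  have hmEP : ∀ t, t ∈ played → (e ∈ t ∨ e' ∈ t) → t ∈ EP := fun t h1 h2 =>
    Finset.mem_filter.mpr ⟨Finset.mem_filter.mpr ⟨Finset.mem_univ _, h2⟩, h1⟩
  -- lower bound for the `e`-or-`e'` tiles in hQ
  have hlow : E.card - EP.card ≤ (hQ.filter (fun t => t ∈ E)).card + 4 := by
    have hsub2 : E \ EP ⊆ (hQ.filter (fun t => t ∈ E)) ∪ (hA ∪ hB) := by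
      intro t ht
      obtain ⟨htE, htnp⟩ := Finset.mem_sdiff.mp ht
      have htp : t ∉ played := fun hc => htnp (hmEP t hc (Finset.mem_filter.mp htE).2)
      rcases hcover t htp with h | h | h | h
      · have h1 := hPav t h
        have h2 := (Finset.mem_filter.mp htE).2
        tauto
      · exact Finset.mem_union_left _ (Finset.mem_filter.mpr ⟨h, htE⟩)
      · exact Finset.mem_union_right _ (Finset.mem_union_left _ h)
      · exact Finset.mem_union_right _ (Finset.mem_union_right _ h)
    have hc1 : (E \ EP).card ≤ ((hQ.filter (fun t => t ∈ E)) ∪ (hA ∪ hB)).card :=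
      Finset.card_le_card hsub2
    have hc2 := Finset.card_union_le (hQ.filter (fun t => t ∈ E)) (hA ∪ hB)
    have hc3 := Finset.card_union_le hA hB
    have hc4 : (E \ EP).card = E.card - EP.card :=
      Finset.card_sdiff_of_subset (Finset.filter_subset _ _)
    omega
  by_cases hc : s1 = Sym2.mk e e'
  · -- the pair tile [e,e'] is on the board
    have hs2s1 : s2 = s1 := by
      have he's1 : e' ∈ s1 := by rw [hc]; simp [Sym2.mem_iff]
      rcases hs2cov s1 hs1p he's1 with h | h
      · exact absurd (by rw [h]; simp [Sym2.mem_iff]) hs1z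
      · exact h.symm
    have hEPsub : EP ⊆ insert (Sym2.mk 0 e) (insert (Sym2.mk 0 e') {s1}) := by
      intro t ht
      obtain ⟨htE, htp⟩ := Finset.mem_filter.mp ht
      rcases (Finset.mem_filter.mp htE).2 with hme | hme'
      · rcases hs1cov t htp hme with h | h <;> simp [h]
      · rcases hs2cov t htp hme' with h | h
        · simp [h]
        · rw [hs2s1] at h; simp [h]
    have hEPcard : EP.card ≤ 3 := by
      refine le_trans (Finset.card_le_card hEPsub) ?_
      refine le_trans (Finset.card_insert_le _ _) ?_
      have := le_trans (Finset.card_insert_le (Sym2.mk 0 e') {s1})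
        (Nat.succ_le_succ (Finset.card_singleton s1).le)
      omega
    have hQsubA : hQ.filter (fun t => t ∈ E)
        ⊆ Finset.univ.filter (fun t : Tile => e' ∈ t ∧ e ∉ t ∧ (0 : Fin 7) ∉ t) := by
      intro t ht
      obtain ⟨htQ, htE⟩ := Finset.mem_filter.mp ht
      have h1 := hQav t htQ
      have h2 := (Finset.mem_filter.mp htE).2
      exact Finset.mem_filter.mpr ⟨Finset.mem_univ _, by tauto⟩
    have hQle : (hQ.filter (fun t => t ∈ E)).card ≤ 5 := by
      have := Finset.card_le_card hQsubA
      rw [card_A e e' he he' hee] at this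
      exact this
    omega
  · -- the pair tile [e,e'] is not on the board
    have hs2mk : s2 ≠ Sym2.mk e e' := by
      intro h
      have hes2 : e ∈ s2 := by rw [h]; simp [Sym2.mem_iff]
      rcases hs1cov s2 hs2p hes2 with h2 | h2
      · exact hs2z (by rw [h2]; simp [Sym2.mem_iff])
      · exact hc (by rw [← h2]; exact h)
    have hes2 : e ∉ s2 := fun hmem =>
      hs2mk ((Sym2.mem_and_mem_iff hee).mp ⟨hmem, hs2e⟩)
    have hEPsub : EP ⊆ insert (Sym2.mk 0 e) (insert (Sym2.mk 0 e') (insert s1 {s2})) := by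
      intro t ht
      obtain ⟨htE, htp⟩ := Finset.mem_filter.mp ht
      rcases (Finset.mem_filter.mp htE).2 with hme | hme'
      · rcases hs1cov t htp hme with h | h <;> simp [h]
      · rcases hs2cov t htp hme' with h | h <;> simp [h]
    have hEPcard : EP.card ≤ 4 := by
      refine le_trans (Finset.card_le_card hEPsub) ?_
      refine le_trans (Finset.card_insert_le _ _) ?_
      refine Nat.succ_le_succ ?_
      refine le_trans (Finset.card_insert_le _ _) ?_
      refine Nat.succ_le_succ ?_
      exact le_trans (Finset.card_insert_le _ _) (Nat.succ_le_succ (Finset.card_singleton s2).le)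
    have hs2A : s2 ∈ Finset.univ.filter (fun t : Tile => e' ∈ t ∧ e ∉ t ∧ (0 : Fin 7) ∉ t) :=
      Finset.mem_filter.mpr ⟨Finset.mem_univ _, hs2e, hes2, hs2z⟩
    have hQsubA : hQ.filter (fun t => t ∈ E)
        ⊆ (Finset.univ.filter (fun t : Tile => e' ∈ t ∧ e ∉ t ∧ (0 : Fin 7) ∉ t)).erase s2 := by
      intro t ht
      obtain ⟨htQ, htE⟩ := Finset.mem_filter.mp ht
      have h1 := hQav t htQ
      have h2 := (Finset.mem_filter.mp htE).2
      refine Finset.mem_erase.mpr ⟨fun hts2 => ?_, Finset.mem_filter.mpr ⟨Finset.mem_univ _, by tauto⟩⟩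
      exact (hdisjQ s2 hs2p) (hts2 ▸ htQ)
    have hQle : (hQ.filter (fun t => t ∈ E)).card ≤ 4 := by
      have h1 := Finset.card_le_card hQsubA
      rw [Finset.card_erase_of_mem hs2A, card_A e e' he he' hee] at h1
      exact h1
    omega

/-! ### Step lemmas -/

lemma Step.turn_eq {s s' : GState} (h : Step s s') : s'.turn = s.turn + 1 := by
  cases h <;> rfl

lemma Step.board_ne_nil {s s' : GState} (h : Step s s') : s'.board ≠ [] := by
  cases h <;> simp_all

lemma Step.hands_cases {s s' : GState} (h : Step s s') (j : Fin 4) :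
    s'.hands j = s.hands j ∨ (j = s.turn ∧ s'.board ≠ s.board) := by
  cases h with
  | playFirst p hrun hb ht =>
    by_cases hj : j = s.turn
    · exact Or.inr ⟨hj, by simp [hb]⟩
    · exact Or.inl (Function.update_of_ne hj _ _)
  | playLeft p hrun hb ht hfit =>
    by_cases hj : j = s.turn
    · exact Or.inr ⟨hj, List.cons_ne_self p s.board⟩
    · exact Or.inl (Function.update_of_ne hj _ _)
  | playRight p hrun hb ht hfit =>
    by_cases hj : j = s.turn
    · refine Or.inr ⟨hj, fun hcc => ?_⟩
      have := congrArg List.length hcc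
      simp at this
    · exact Or.inl (Function.update_of_ne hj _ _)
  | pass => exact Or.inl rfl

lemma Step.pass_of_board_eq {s s' : GState} (h : Step s s') (hb : s'.board = s.board) :
    ∀ t ∈ s.hands s.turn, ¬ canExtend s.board t := by
  cases h with
  | playFirst p hrun hbe ht =>
    rw [hbe] at hb
    simp at hb
  | playLeft p hrun hbe ht hfit => exact absurd hb (List.cons_ne_self p s.board)
  | playRight p hrun hbe ht hfit =>
    have := congrArg List.length hb
    simp at this
  | pass hrun hbe hcant => exact hcant

lemma Step.play_or_stuck {s s' : GState} (h : Step s s') :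
    s'.board ≠ s.board ∨ (∀ t ∈ s.hands s.turn, ¬ canExtend s.board t) := by
  by_cases hb : s'.board = s.board
  · exact Or.inr (h.pass_of_board_eq hb)
  · exact Or.inl hb

lemma Step.ends {s s' : GState} (h : Step s s') (hb : s.board ≠ []) :
    s'.board ≠ [] ∧
      (s'.board.head!.1 = s.board.head!.1 ∨ s'.board.getLast!.2 = s.board.getLast!.2) := by
  cases h with
  | playFirst p hrun hbe ht => exact absurd hbe hb
  | playLeft p hrun hbe ht hfit =>
    exact ⟨by simp, Or.inr (by rw [getLast!_cons' p s.board hbe])⟩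
  | playRight p hrun hbe ht hfit =>
    exact ⟨by simp, Or.inl (by rw [head!_append' s.board p hbe])⟩
  | pass hrun hbe hcant => exact ⟨hb, Or.inl rfl⟩

lemma Step.chain {s s' : GState} (h : Step s s')
    (hch : s.board.Chain' fun p q => p.2 = q.1) :
    s'.board.Chain' fun p q => p.2 = q.1 := by
  cases h with
  | playFirst p hrun hb ht => exact List.isChain_singleton p
  | playLeft p hrun hb ht hfit =>
    refine List.isChain_cons.mpr ⟨?_, hch⟩
    intro y hy
    rw [List.head?_eq_head hb] at hy
    have hyy : y = s.board.head hb := by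
      simpa using hy.symm
    rw [hyy, hfit, head!_eq_head' _ hb]
  | playRight p hrun hb ht hfit =>
    refine List.isChain_append.mpr ⟨hch, List.isChain_singleton p, ?_⟩
    intro x hx y hy
    rw [List.getLast?_eq_getLast_of_ne_nil hb] at hx
    have hxx : x = s.board.getLast hb := by simpa using hx.symm
    have hyy : y = p := by simpa using hy.symm
    rw [hxx, hyy, ← getLast!_eq_getLast' _ hb, ← hfit]
  | pass hrun hbe hcant => exact hch

lemma hands_count_update (h : Fin 4 → Finset Tile) (j : Fin 4) (a : Tile)
    (ha : a ∈ h j) (t : Tile) :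
    ∑ i : Fin 4, Multiset.count t ((Function.update h j ((h j).erase a)) i).val
      + (if t = a then 1 else 0) = ∑ i : Fin 4, Multiset.count t (h i).val := by
  classical
  have h1 : ∑ i : Fin 4, Multiset.count t ((Function.update h j ((h j).erase a)) i).val
      = Multiset.count t ((h j).val.erase a)
        + ∑ i ∈ Finset.univ.erase j, Multiset.count t (h i).val := by
    rw [← Finset.add_sum_erase _
      (fun i => Multiset.count t ((Function.update h j ((h j).erase a)) i).val)
      (Finset.mem_univ j)]
    congr 1
    · rw [Function.update_self, Finset.erase_val]
    · exact Finset.sum_congr rfl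
        (fun i hi => by rw [Function.update_of_ne (Finset.ne_of_mem_erase hi)])
  have h2 : ∑ i : Fin 4, Multiset.count t (h i).val
      = Multiset.count t (h j).val
        + ∑ i ∈ Finset.univ.erase j, Multiset.count t (h i).val :=
    (Finset.add_sum_erase _ _ (Finset.mem_univ j)).symm
  rw [h1, h2]
  by_cases hta : t = a
  · subst hta
    rw [Multiset.count_erase_self, if_pos rfl]
    have := Multiset.one_le_count_iff_mem.mpr (Finset.mem_val.mpr ha)
    omega
  · rw [Multiset.count_erase_of_ne hta, if_neg hta]
    omega

lemma Step.cntAll {s s' : GState} (h : Step s s')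
    (hinv : ∀ t : Tile, Multiset.count t (↑(s.board.map (fun p => Sym2.mk p.1 p.2)) : Multiset Tile)
        + ∑ j : Fin 4, Multiset.count t (s.hands j).val = 1) :
    ∀ t : Tile, Multiset.count t (↑(s'.board.map (fun p => Sym2.mk p.1 p.2)) : Multiset Tile)
        + ∑ j : Fin 4, Multiset.count t (s'.hands j).val = 1 := by
  intro t
  cases h with
  | playFirst p hrun hb ht =>
    have hu := hands_count_update s.hands s.turn (Sym2.mk p.1 p.2) ht t
    have h0 := hinv t
    rw [hb] at h0
    have hz : Multiset.count t (↑(([] : Board).map (fun p => Sym2.mk p.1 p.2)) : Multiset Tile) = 0 := by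
      simp
    rw [hz] at h0
    have hbc : Multiset.count t (↑(([p] : Board).map (fun p => Sym2.mk p.1 p.2)) : Multiset Tile)
        = (if t = Sym2.mk p.1 p.2 then 1 else 0) := by
      simp [Multiset.count_singleton]
    show Multiset.count t (↑(([p] : Board).map (fun p => Sym2.mk p.1 p.2)) : Multiset Tile)
        + ∑ j : Fin 4, Multiset.count t ((Function.update s.hands s.turn
          ((s.hands s.turn).erase (Sym2.mk p.1 p.2))) j).val = 1
    omega
  | playLeft p hrun hb ht hfit =>
    have hu := hands_count_update s.hands s.turn (Sym2.mk p.1 p.2) ht t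
    have h0 := hinv t
    have hbc : Multiset.count t (↑(((p :: s.board) : Board).map (fun p => Sym2.mk p.1 p.2)) : Multiset Tile)
        = Multiset.count t (↑(s.board.map (fun p => Sym2.mk p.1 p.2)) : Multiset Tile)
          + (if t = Sym2.mk p.1 p.2 then 1 else 0) := by
      rw [List.map_cons, ← Multiset.cons_coe, Multiset.count_cons]
    show Multiset.count t (↑(((p :: s.board) : Board).map (fun p => Sym2.mk p.1 p.2)) : Multiset Tile)
        + ∑ j : Fin 4, Multiset.count t ((Function.update s.hands s.turn
          ((s.hands s.turn).erase (Sym2.mk p.1 p.2))) j).val = 1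
    omega
  | playRight p hrun hb ht hfit =>
    have hu := hands_count_update s.hands s.turn (Sym2.mk p.1 p.2) ht t
    have h0 := hinv t
    have hbc : Multiset.count t (↑(((s.board ++ [p]) : Board).map (fun p => Sym2.mk p.1 p.2)) : Multiset Tile)
        = Multiset.count t (↑(s.board.map (fun p => Sym2.mk p.1 p.2)) : Multiset Tile)
          + (if t = Sym2.mk p.1 p.2 then 1 else 0) := by
      rw [List.map_append, ← Multiset.coe_add, Multiset.count_add]
      simp [Multiset.count_singleton]
    show Multiset.count t (↑(((s.board ++ [p]) : Board).map (fun p => Sym2.mk p.1 p.2)) : Multiset Tile)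
        + ∑ j : Fin 4, Multiset.count t ((Function.update s.hands s.turn
          ((s.hands s.turn).erase (Sym2.mk p.1 p.2))) j).val = 1
    omega
  | pass hrun hbe hcant => exact hinv t

/-! ### Game-level invariants -/

lemma game_step (g : Game) (k : ℕ) (hk : k + 1 ≤ g.states.length - 1) :
    Step (g.states.get ⟨k, by omega⟩) (g.states.get ⟨k + 1, by omega⟩) :=
  List.isChain_iff_getElem.mp g.chain_states k (by omega)

lemma game_state_zero (g : Game) (h0 : 0 < g.states.length) :
    g.states.get ⟨0, h0⟩ = ⟨[], g.initHands, 0⟩ := by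
  obtain ⟨a, l, hal⟩ := List.exists_cons_of_ne_nil g.states_ne
  have h1 : g.states.head g.states_ne = a := by simp [hal]
  rw [List.get_of_eq hal]
  show a = _
  rw [← h1, g.head_states]

lemma game_turn (g : Game) : ∀ (k : ℕ) (hk : k < g.states.length),
    (g.states.get ⟨k, hk⟩).turn = (k : Fin 4) := by
  intro k
  induction k with
  | zero => intro hk; rw [game_state_zero g hk]; rfl
  | succ k ih =>
    intro hk
    have hs := game_step g k (by omega)
    rw [hs.turn_eq, ih (by omega)]
    push_cast
    ring

lemma game_chain (g : Game) : ∀ (k : ℕ) (hk : k < g.states.length),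
    (g.states.get ⟨k, hk⟩).board.Chain' fun p q => p.2 = q.1 := by
  intro k
  induction k with
  | zero => intro hk; rw [game_state_zero g hk]; exact List.isChain_nil
  | succ k ih =>
    intro hk
    exact (game_step g k (by omega)).chain (ih (by omega))

lemma game_cntAll (g : Game) : ∀ (k : ℕ) (hk : k < g.states.length),
    ∀ t : Tile, Multiset.count t
        (↑((g.states.get ⟨k, hk⟩).board.map (fun p => Sym2.mk p.1 p.2)) : Multiset Tile)
      + ∑ j : Fin 4, Multiset.count t ((g.states.get ⟨k, hk⟩).hands j).val = 1 := by
  intro k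
  induction k with
  | zero =>
    intro hk t
    rw [game_state_zero g hk]
    have hz : Multiset.count t (↑(([] : Board).map (fun p => Sym2.mk p.1 p.2)) : Multiset Tile) = 0 := by simp
    show Multiset.count t (↑(([] : Board).map (fun p => Sym2.mk p.1 p.2)) : Multiset Tile)
      + ∑ j : Fin 4, Multiset.count t ((g.initHands) j).val = 1
    rw [hz]
    obtain ⟨j0, hj0⟩ := g.cover_initHands t
    rw [Finset.sum_eq_single_of_mem j0 (Finset.mem_univ j0)]
    · have : Multiset.count t (g.initHands j0).val = if t ∈ g.initHands j0 then 1 else 0 :=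
        Multiset.count_eq_of_nodup (g.initHands j0).nodup
      rw [this, if_pos hj0]
    · intro j _ hjne
      refine Multiset.count_eq_zero_of_notMem (fun hm => ?_)
      exact (Finset.disjoint_left.mp (g.disj_initHands j j0 hjne)) (Finset.mem_val.mp hm) hj0
  | succ k ih =>
    intro hk
    exact (game_step g k (by omega)).cntAll (ih (by omega))

lemma game_hands13 (g : Game) (hng : ¬ g.teamPlays true) :
    ∀ (k : ℕ) (hk : k < g.states.length), ∀ j : Fin 4, playerTeam j = true →
      (g.states.get ⟨k, hk⟩).hands j = g.initHands j := by
  intro k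
  induction k with
  | zero => intro hk j _; rw [game_state_zero g hk]
  | succ k ih =>
    intro hk j hj
    have hs := game_step g k (by omega)
    rcases hs.hands_cases j with h | ⟨hjt, hbne⟩
    · rw [h]; exact ih (by omega) j hj
    · exfalso
      exact hng ⟨k, by omega, by rw [← hjt]; exact hj, hbne⟩

lemma game_stuck (g : Game) (hng : ¬ g.teamPlays true) (k : ℕ) (hk : k < g.states.length)
    (hteamk : playerTeam ((k : Fin 4)) = true)
    (hblk_final : ∀ j : Fin 4, ∀ t ∈ (g.states.get ⟨g.states.length - 1, by omega⟩).hands j,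
      ¬ canExtend (g.states.get ⟨g.states.length - 1, by omega⟩).board t) :
    ∀ t ∈ g.initHands ((k : Fin 4)), ¬ canExtend (g.states.get ⟨k, hk⟩).board t := by
  rcases Nat.lt_or_ge k (g.states.length - 1) with hlt | hge
  · have hsk := game_step g k (by omega)
    rcases hsk.play_or_stuck with hplay | hstuck
    · exact absurd ⟨k, by omega, by rw [game_turn g k hk]; exact hteamk, hplay⟩ hng
    · intro t ht
      exact hstuck t (by
        rw [game_turn g k hk, game_hands13 g hng k hk _ hteamk]
        exact ht)
  · have heq : k = g.states.length - 1 := by omega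
    subst heq
    intro t ht
    exact hblk_final _ t (by
      rw [game_hands13 g hng _ _ _ hteamk]
      exact ht)

end TrancaAux

set_option maxHeartbeats 2000000 in
/-- In a minimal block (tranca mínima), if at some turn a player of the losing team
passes at a moment when the two open ends of the chain are two distinct nonzero
values, then the losing team plays at least one tile during the game. -/
theorem minimal_block_pass_two_nonzero_ends (g : Game) (tm : Bool)
    (hblocked : g.EndsBlocked)
    (hmin : boardPips g.finalState.board = 42)
    (hwin : g.finalState.teamPips tm < g.finalState.teamPips (!tm))
    (hpass : ∃ (i : ℕ) (h : i + 1 < g.states.length),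
      playerTeam ((g.states.get ⟨i, by omega⟩).turn) = !tm ∧
      (g.states.get ⟨i + 1, h⟩).board = (g.states.get ⟨i, by omega⟩).board ∧
      (g.states.get ⟨i, by omega⟩).board ≠ [] ∧
      (g.states.get ⟨i, by omega⟩).board.head!.1 ≠ 0 ∧
      (g.states.get ⟨i, by omega⟩).board.getLast!.2 ≠ 0 ∧
      (g.states.get ⟨i, by omega⟩).board.head!.1 ≠
        (g.states.get ⟨i, by omega⟩).board.getLast!.2) :
    g.teamPlays (!tm) := by
  classical
  by_contra hcon
  obtain ⟨i, hi1, hteam, hbeq, hbne, he1, he2, hnee⟩ := hpass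
  have hn : i + 1 < g.states.length := hi1
  -- the pass is not the very first state
  have hne0 : i ≠ 0 := by
    intro h0
    subst h0
    rw [game_state_zero g (by omega)] at hbne
    exact hbne rfl
  -- player 0 places the first tile
  have hfirst : g.teamPlays false := by
    have hs := game_step g 0 (by omega)
    refine ⟨0, by omega, ?_, ?_⟩
    · rw [game_turn g 0 (by omega)]
      rfl
    · rw [game_state_zero g (by omega)]
      exact hs.board_ne_nil
  -- hence the losing team is team `true`
  cases tm with
  | true =>
    simp only [Bool.not_true] at hcon
    exact hcon hfirst
  | false =>
  simp only [Bool.not_false] at hcon hteam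
  -- the passing player's index is odd
  have hti : (g.states.get ⟨i, by omega⟩).turn = (i : Fin 4) := game_turn g i (by omega)
  have hodd : i % 2 = 1 := by
    rw [hti, playerTeam] at hteam
    have h1 := of_decide_eq_true hteam
    have h2 : ((i : Fin 4)).val = i % 4 := Fin.val_natCast i 4
    omega
  -- the final state
  have hfin : g.finalState = g.states.get ⟨g.states.length - 1, by
      have := g.states_ne
      cases h : g.states with
      | nil => exact absurd h this
      | cons a l => simp [h]⟩ := by
    rw [Game.finalState, List.getLast_eq_getElem]
    rfl
  rw [Game.EndsBlocked, IsBlocked, hfin] at hblocked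
  obtain ⟨hBne, hblk⟩ := hblocked
  rw [hfin] at hmin
  have hnlen : 0 < g.states.length := by omega
  -- structure of the final position
  obtain ⟨played, hdisj, hcover, hcard10, hcard18, hhead0, hlast0, hocc2⟩ :=
    finalFacts (g.states.get ⟨g.states.length - 1, by omega⟩).board
      (g.states.get ⟨g.states.length - 1, by omega⟩).hands
      hBne (game_chain g _ (by omega)) (game_cntAll g _ (by omega)) hblk hmin
  -- every tile containing 0 has been played
  have h0played : ∀ w : Fin 7, Sym2.mk 0 w ∈ played := by
    intro w
    by_contra hnp
    obtain ⟨j, hj⟩ := hcover _ hnp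
    have hb := hblk j _ hj
    rw [canExtend] at hb
    push_neg at hb
    have h00 := (hb hBne).1
    rw [hhead0] at h00
    exact h00 (by simp [Sym2.mem_iff])
  -- players of team true hold their initial hands and avoid 0
  have hhands13 : ∀ (k : ℕ) (hk : k < g.states.length), ∀ j : Fin 4, playerTeam j = true →
      (g.states.get ⟨k, hk⟩).hands j = g.initHands j := game_hands13 g hcon
  have hQav0 : ∀ j : Fin 4, playerTeam j = true →
      ∀ t ∈ g.initHands j, (0 : Fin 7) ∉ t := by
    intro j hj t ht
    have hb := hblk j t (by
      rw [hhands13 (g.states.length - 1) (by omega) j hj]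
      exact ht)
    rw [canExtend] at hb
    push_neg at hb
    have h00 := (hb hBne).1
    rw [hhead0] at h00
    exact h00
  -- the move at state i is a pass, so the passing player avoids both ends
  have hteamP : playerTeam ((i : Fin 4)) = true := by rw [← hti]; exact hteam
  have hPav : ∀ t ∈ g.initHands ((i : Fin 4)),
      (g.states.get ⟨i, by omega⟩).board.head!.1 ∉ t ∧
      (g.states.get ⟨i, by omega⟩).board.getLast!.2 ∉ t := by
    intro t ht
    have hsi := game_step g i (by omega)
    have hp := hsi.pass_of_board_eq hbeq t (by
      rw [hti, hhands13 i (by omega) _ hteamP]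
      exact ht)
    rw [canExtend] at hp
    push_neg at hp
    exact hp hbne
  -- the game does not end at state i+1
  have hni : g.states.length - 1 ≠ i + 1 := by
    intro hq
    have hgeq : g.states.get ⟨g.states.length - 1, by omega⟩
        = g.states.get ⟨i + 1, by omega⟩ := by
      congr 1
      exact Fin.ext (by simp [hq])
    rw [hgeq, hbeq] at hhead0
    exact he1 hhead0
  have hmi : i + 2 ≤ g.states.length - 1 := by omega
  have hlti : i < g.states.length := by omega
  have hlti2 : i + 2 < g.states.length := by omega
  have hltf : g.states.length - 1 < g.states.length := by omega
  -- the board at state i+2 keeps one of the two ends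
  have hsi1 := game_step g (i + 1) (by omega)
  have hends := hsi1.ends (by
    rw [hbeq]
    exact hbne)
  have hE1 : (g.states.get ⟨i + 1, hi1⟩).board.head!.1
      = (g.states.get ⟨i, hlti⟩).board.head!.1 := congrArg (fun b => b.head!.1) hbeq
  have hE2 : (g.states.get ⟨i + 1, hi1⟩).board.getLast!.2
      = (g.states.get ⟨i, hlti⟩).board.getLast!.2 := congrArg (fun b => b.getLast!.2) hbeq
  -- the player at state i+2 is the passing player's partner; they avoid an end
  have hQteam : playerTeam (((i + 2 : ℕ)) : Fin 4) = true := by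
    rw [playerTeam]
    apply decide_eq_true
    rw [Fin.val_natCast]
    omega
  have hti2 : (g.states.get ⟨i + 2, hlti2⟩).turn = ((i + 2 : ℕ) : Fin 4) :=
    game_turn g (i + 2) (by omega)
  have hQstuck : ∀ t ∈ g.initHands (((i + 2 : ℕ)) : Fin 4),
      ¬ canExtend (g.states.get ⟨i + 2, hlti2⟩).board t :=
    game_stuck g hcon (i + 2) hlti2 hQteam hblk
  have hQavE : (∀ t ∈ g.initHands (((i + 2 : ℕ)) : Fin 4),
        (g.states.get ⟨i, hlti⟩).board.head!.1 ∉ t) ∨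
      (∀ t ∈ g.initHands (((i + 2 : ℕ)) : Fin 4),
        (g.states.get ⟨i, hlti⟩).board.getLast!.2 ∉ t) := by
    rcases hends.2 with hL | hR
    · left
      intro t ht
      have hb := hQstuck t ht
      rw [canExtend] at hb
      push_neg at hb
      rw [← hE1, ← hL]
      exact (hb hends.1).1
    · right
      intro t ht
      have hb := hQstuck t ht
      rw [canExtend] at hb
      push_neg at hb
      rw [← hE2, ← hR]
      exact (hb hends.1).2
  -- the two hands of team true are the hands of players 1 and 3
  have hval1 : (1 : Fin 4).val = 1 := rfl
  have hval3 : (3 : Fin 4).val = 3 := rfl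
  have h1cast : ((i : Fin 4)).val = i % 4 := Fin.val_natCast i 4
  have h2cast : (((i + 2 : ℕ) : Fin 4)).val = (i + 2) % 4 := Fin.val_natCast _ 4
  have hiv : ((i : Fin 4) = 1 ∧ ((i + 2 : ℕ) : Fin 4) = 3)
      ∨ ((i : Fin 4) = 3 ∧ ((i + 2 : ℕ) : Fin 4) = 1) := by
    rcases (by omega : i % 4 = 1 ∨ i % 4 = 3) with h | h
    · exact Or.inl ⟨Fin.ext (by omega), Fin.ext (by omega)⟩
    · exact Or.inr ⟨Fin.ext (by omega), Fin.ext (by omega)⟩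
  have hh1 : (g.states.get ⟨g.states.length - 1, hltf⟩).hands 1 = g.initHands 1 :=
    hhands13 _ (by omega) 1 (by decide)
  have hh3 : (g.states.get ⟨g.states.length - 1, hltf⟩).hands 3 = g.initHands 3 :=
    hhands13 _ (by omega) 3 (by decide)
  -- cover by the four hands
  have hcov4 : ∀ t : Tile, t ∉ played →
      t ∈ g.initHands ((i : Fin 4)) ∨ t ∈ g.initHands (((i + 2 : ℕ)) : Fin 4) ∨
      t ∈ (g.states.get ⟨g.states.length - 1, hltf⟩).hands 0 ∨
      t ∈ (g.states.get ⟨g.states.length - 1, hltf⟩).hands 2 := by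
    intro t ht
    obtain ⟨j, hj⟩ := hcover t ht
    rcases hiv with ⟨hp, hq⟩ | ⟨hp, hq⟩ <;> fin_cases j
    · right; right; left; exact hj
    · left; rw [hp, ← hh1]; exact hj
    · right; right; right; exact hj
    · right; left; rw [hq, ← hh3]; exact hj
    · right; right; left; exact hj
    · right; left; rw [hq, ← hh1]; exact hj
    · right; right; right; exact hj
    · left; rw [hp, ← hh3]; exact hj
  -- the two remaining hands have at most 4 tiles
  have hcards4 : ((g.states.get ⟨g.states.length - 1, hltf⟩).hands 0).card
      + ((g.states.get ⟨g.states.length - 1, hltf⟩).hands 2).card ≤ 4 := by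
    rw [Fin.sum_univ_four] at hcard18
    rw [hh1, hh3, g.card_initHands 1, g.card_initHands 3] at hcard18
    omega
  -- disjointness of Q's hand from the played tiles
  have hdisjQ : ∀ t ∈ played, t ∉ g.initHands (((i + 2 : ℕ)) : Fin 4) := by
    intro t ht htq
    exact hdisj t ht (((i + 2 : ℕ)) : Fin 4) (by
      rw [hhands13 (g.states.length - 1) (by omega) _ hQteam]
      exact htq)
  -- wrap up : apply the endgame counting lemma
  rcases hQavE with hq | hq
  · exact endgame played (g.initHands ((i : Fin 4)))
      (g.initHands (((i + 2 : ℕ)) : Fin 4))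
      ((g.states.get ⟨g.states.length - 1, hltf⟩).hands 0)
      ((g.states.get ⟨g.states.length - 1, hltf⟩).hands 2)
      _ _ he1 he2 hnee hdisjQ hcov4 hcards4
      (hocc2 _ he1) (hocc2 _ he2) (h0played _) (h0played _)
      hPav (fun t ht => ⟨hq t ht, hQav0 _ hQteam t ht⟩)
  · exact endgame played (g.initHands ((i : Fin 4)))
      (g.initHands (((i + 2 : ℕ)) : Fin 4))
      ((g.states.get ⟨g.states.length - 1, hltf⟩).hands 0)
      ((g.states.get ⟨g.states.length - 1, hltf⟩).hands 2)
      _ _ he2 he1 (Ne.symm hnee) hdisjQ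
      (fun t ht => hcov4 t ht) hcards4
      (hocc2 _ he2) (hocc2 _ he1) (h0played _) (h0played _)
      (fun t ht => ⟨(hPav t ht).2, (hPav t ht).1⟩)
      (fun t ht => ⟨hq t ht, hQav0 _ hQteam t ht⟩)
end
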